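/- arXiv:math/9210213 — 4 statements merged into one kernel-verified Lean document; each statement's English description precedes it below -/
import Mathlib

section
/- For every d ≥ 1 and every q ≤ d, there exists a family of compact convex sets in R^d with the (q,q) property whose piercing number is infinite; i.e., for each n there is a finite family of compact convex sets in R^d in which any q members have a common point, but which cannot be pierced by n points. -/
open Polynomial Finset

/-- The linear functional `x ↦ ∑ j, t^j * x j` on `ℝ^d`. -/
noncomputable def pierceL (d : ℕ) (t : ℝ) : (Fin d → ℝ) →ₗ[ℝ] ℝ :=
  ∑ j : Fin d, (t ^ (j : ℕ)) • LinearMap.proj j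

lemma pierceL_apply (d : ℕ) (t : ℝ) (x : Fin d → ℝ) :
    pierceL d t x = ∑ j : Fin d, t ^ (j : ℕ) * x j := by
  simp [pierceL, LinearMap.sum_apply, smul_eq_mul]

/-- For any `q ≤ d` distinct parameters there is a common solution. -/
lemma pierce_exists_sol (d q : ℕ) (hq : q ≤ d) (S : Finset ℝ) (hS : S.card = q) :
    ∃ x : Fin d → ℝ, ∀ t ∈ S, pierceL d t x = t ^ d := by
  set g : ℝ[X] := X ^ (d - q) * ∏ a ∈ S, (X - C a) with hg
  have hmon : g.Monic :=
    (monic_X_pow _).mul (monic_prod_of_monic _ _ fun a _ => monic_X_sub_C a)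
  have hdeg : g.natDegree = d := by
    rw [hg, (monic_X_pow _).natDegree_mul (monic_prod_of_monic _ _ fun a _ => monic_X_sub_C a),
      natDegree_X_pow, natDegree_prod_of_monic _ _ fun a _ => monic_X_sub_C a]
    simp [hS, Nat.sub_add_cancel hq]
  refine ⟨fun j => -(g.coeff j), fun t ht => ?_⟩
  have hev : g.eval t = 0 := by
    rw [hg, eval_mul, eval_prod]
    have : ∏ a ∈ S, (X - C a).eval t = 0 :=
      Finset.prod_eq_zero ht (by simp)
    rw [this, mul_zero]
  have hsum : g.eval t = ∑ i ∈ Finset.range (d + 1), g.coeff i * t ^ i := by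
    rw [eval_eq_sum_range, hdeg]
  rw [Finset.sum_range_succ] at hsum
  have hcd : g.coeff d = 1 := by
    have := hmon.coeff_natDegree
    rwa [hdeg] at this
  rw [hcd, one_mul, hev] at hsum
  rw [pierceL_apply]
  have hfin : ∑ j : Fin d, t ^ (j : ℕ) * -(g.coeff (j : ℕ))
      = -∑ i ∈ Finset.range d, g.coeff i * t ^ i := by
    rw [← Finset.sum_neg_distrib, Fin.sum_univ_eq_sum_range (fun j => t ^ j * -(g.coeff j))]
    exact Finset.sum_congr rfl fun i _ => by ring
  rw [hfin]
  linarith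

/-- Any single point lies on at most `d` of the hyperplanes. -/
lemma pierce_card_le (d : ℕ) (_hd : 1 ≤ d) (x : Fin d → ℝ) {ι : Type} [Fintype ι]
    (t : ι → ℝ) (ht : Function.Injective t) :
    (Finset.univ.filter fun i => pierceL d (t i) x = (t i) ^ d).card ≤ d := by
  set p : ℝ[X] := X ^ d - ∑ j : Fin d, C (x j) * X ^ (j : ℕ) with hp
  have hcoeff : p.coeff d = 1 := by
    rw [hp, coeff_sub, coeff_X_pow, if_pos rfl]
    have : (∑ j : Fin d, C (x j) * X ^ (j : ℕ)).coeff d = 0 := by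
      rw [finset_sum_coeff]
      refine Finset.sum_eq_zero fun j _ => ?_
      rw [coeff_C_mul, coeff_X_pow, if_neg (Nat.ne_of_lt j.2).symm, mul_zero]
    simp [this]
  have hp0 : p ≠ 0 := fun h => by simp [h] at hcoeff
  have hdegle : p.natDegree ≤ d := by
    refine le_trans (natDegree_sub_le _ _) (max_le (le_of_eq (natDegree_X_pow d)) ?_)
    refine natDegree_sum_le_of_forall_le _ _ fun j _ => ?_
    exact le_trans (natDegree_C_mul_le _ _) (le_trans (le_of_eq (natDegree_X_pow _)) (le_of_lt j.2))
  have hev : ∀ s : ℝ, p.eval s = s ^ d - ∑ j : Fin d, s ^ (j : ℕ) * x j := by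
    intro s
    rw [hp, eval_sub, eval_pow, eval_X, eval_finset_sum]
    congr 1
    exact Finset.sum_congr rfl fun j _ => by rw [eval_mul, eval_C, eval_pow, eval_X]; ring
  have hroot : ∀ i : ι, pierceL d (t i) x = (t i) ^ d → p.IsRoot (t i) := by
    intro i hi
    have := hev (t i)
    rw [pierceL_apply] at hi
    simp [IsRoot, this, hi]
  calc (Finset.univ.filter fun i => pierceL d (t i) x = (t i) ^ d).card
      ≤ p.roots.toFinset.card := by
        refine Finset.card_le_card_of_injOn t ?_ ?_
        · intro i hi
          rw [Finset.mem_coe, Finset.mem_filter] at hi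
          rw [Finset.mem_coe, Multiset.mem_toFinset, mem_roots hp0]
          exact hroot i hi.2
        · exact fun a _ b _ h => ht h
    _ ≤ Multiset.card p.roots := Multiset.toFinset_card_le _
    _ ≤ p.natDegree := card_roots' p
    _ ≤ d := hdegle

/-- For q ≤ d the piercing number can be infinite: for every n there is a finite family
of compact convex sets in ℝ^d, any q of which have a common point, that cannot be pierced
by n points. -/
theorem unbounded_piercing_q_le_d (d q : ℕ) (hd : 1 ≤ d) (hq : q ≤ d) (n : ℕ) :
    ∃ (ι : Type) (_ : Fintype ι) (F : ι → Set (Fin d → ℝ)),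
      (∀ i, IsCompact (F i) ∧ Convex ℝ (F i)) ∧
      (∀ S : Finset ι, S.card = q → (⋂ i ∈ S, F i).Nonempty) ∧
      (∀ X : Finset (Fin d → ℝ), X.card ≤ n → ∃ i, ∀ x ∈ X, x ∉ F i) := by
  classical
  set N := n * d + 1 with hN
  set t : Fin N → ℝ := fun i => ((i : ℕ) : ℝ) with htdef
  have htinj : Function.Injective t := by
    intro a b h
    simp only [htdef] at h
    exact Fin.ext (Nat.cast_injective h)
  have hsol : ∀ S : Finset (Fin N), S.card = q → ∃ x : Fin d → ℝ,
      ∀ i ∈ S, pierceL d (t i) x = (t i) ^ d := by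
    intro S hS
    obtain ⟨x, hx⟩ := pierce_exists_sol d q hq (S.image t)
      (by rw [Finset.card_image_of_injective _ htinj, hS])
    exact ⟨x, fun i hi => hx (t i) (Finset.mem_image_of_mem t hi)⟩
  choose sol hsolspec using hsol
  set f : Finset (Fin N) → (Fin d → ℝ) :=
    fun S => if h : S.card = q then sol S h else 0 with hfdef
  set R : ℝ := ∑ S : Finset (Fin N), ‖f S‖ with hRdef
  have hfR : ∀ S : Finset (Fin N), ‖f S‖ ≤ R := by
    intro S
    exact Finset.single_le_sum (f := fun S => ‖f S‖)
      (fun S _ => norm_nonneg _) (Finset.mem_univ S)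
  refine ⟨Fin N, inferInstance,
    fun i => {x | pierceL d (t i) x = (t i) ^ d} ∩ Metric.closedBall 0 R, ?_, ?_, ?_⟩
  · intro i
    have hcl : IsClosed {x : Fin d → ℝ | pierceL d (t i) x = (t i) ^ d} :=
      isClosed_eq (pierceL d (t i)).continuous_of_finiteDimensional continuous_const
    constructor
    · exact (isCompact_closedBall 0 R).inter_left hcl
    · exact (convex_hyperplane (pierceL d (t i)).isLinear _).inter (convex_closedBall 0 R)
  · intro S hS
    refine ⟨f S, Set.mem_iInter₂.mpr fun i hi => ?_⟩
    constructor
    · have : f S = sol S hS := by rw [hfdef]; exact dif_pos hS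
      rw [this]
      exact hsolspec S hS i hi
    · rw [Metric.mem_closedBall, dist_zero_right]
      exact hfR S
  · intro X hX
    set T : Finset (Fin N) :=
      X.biUnion (fun x => Finset.univ.filter fun i => pierceL d (t i) x = (t i) ^ d) with hT
    have hTcard : T.card < N := by
      calc T.card ≤ ∑ x ∈ X, (Finset.univ.filter
            fun i => pierceL d (t i) x = (t i) ^ d).card := Finset.card_biUnion_le
        _ ≤ ∑ _x ∈ X, d := Finset.sum_le_sum fun x _ => pierce_card_le d hd x t htinj
        _ = X.card * d := by rw [Finset.sum_const, smul_eq_mul]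
        _ ≤ n * d := Nat.mul_le_mul_right d hX
        _ < N := by omega
    have hcompl : (Tᶜ : Finset (Fin N)).Nonempty := by
      rw [← Finset.card_pos, Finset.card_compl, Fintype.card_fin]
      omega
    obtain ⟨i, hi⟩ := hcompl
    refine ⟨i, fun x hx hxF => ?_⟩
    have : i ∈ T := Finset.mem_biUnion.mpr
      ⟨x, hx, Finset.mem_filter.mpr ⟨Finset.mem_univ _, hxF.1⟩⟩
    exact (Finset.mem_compl.mp hi) this
end

section
/- For every ε > 0 and every dimension d there is a finite constant c = c(ε,d) such that for every probability measure μ on R^d there exists a set X of at most c points in R^d with the property that every compact convex set K in R^d with μ(K) ≥ ε contains a point of X. -/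
open MeasureTheory Set Filter Topology ENNReal



namespace WeakNetAux

variable {d : ℕ}

/-- Insert `t` as coordinate `0`. -/
def consMap (t : ℝ) : (Fin d → ℝ) → (Fin (d+1) → ℝ) := fun y => Fin.cons t y

@[simp] lemma consMap_zero (t : ℝ) (y : Fin d → ℝ) : consMap t y 0 = t := rfl

@[simp] lemma consMap_succ (t : ℝ) (y : Fin d → ℝ) (j : Fin d) :
    consMap t y j.succ = y j := rfl

@[simp] lemma tail_consMap (t : ℝ) (y : Fin d → ℝ) : Fin.tail (consMap t y) = y :=
  Fin.tail_cons _ _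

lemma consMap_tail {t : ℝ} {x : Fin (d+1) → ℝ} (hx : x 0 = t) :
    consMap t (Fin.tail x) = x := by
  rw [consMap, ← hx]; exact Fin.cons_self_tail x

lemma continuous_cons (t : ℝ) :
    Continuous (consMap t : (Fin d → ℝ) → Fin (d+1) → ℝ) := by
  refine continuous_pi fun i => ?_
  refine Fin.cases ?_ (fun j => ?_) i
  · simpa using continuous_const
  · simpa using continuous_apply j

lemma measurable_tail :
    Measurable (Fin.tail : (Fin (d+1) → ℝ) → Fin d → ℝ) :=
  measurable_pi_lambda _ fun i => measurable_pi_apply i.succ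

lemma cons_preimage_eq (t : ℝ) (K : Set (Fin (d+1) → ℝ)) :
    (consMap t ⁻¹' K : Set (Fin d → ℝ)) = Fin.tail '' (K ∩ {x | x 0 = t}) := by
  ext y
  constructor
  · intro hy
    exact ⟨consMap t y, ⟨hy, rfl⟩, by simp⟩
  · rintro ⟨x, ⟨hxK, hx0⟩, rfl⟩
    simpa [Set.mem_preimage, consMap_tail hx0] using hxK

lemma cons_preimage_compact (t : ℝ) {K : Set (Fin (d+1) → ℝ)} (hK : IsCompact K) :
    IsCompact (consMap t ⁻¹' K : Set (Fin d → ℝ)) := by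
  rw [cons_preimage_eq]
  exact (hK.inter_right (isClosed_eq (continuous_apply 0) continuous_const)).image
    (continuous_pi fun i => continuous_apply i.succ)

lemma cons_preimage_convex (t : ℝ) {K : Set (Fin (d+1) → ℝ)} (hK : Convex ℝ K) :
    Convex ℝ (consMap t ⁻¹' K : Set (Fin d → ℝ)) := by
  intro y₁ h₁ y₂ h₂ a b ha hb hab
  have key : consMap t (a • y₁ + b • y₂)
      = a • consMap t y₁ + b • consMap t y₂ := by
    funext i
    refine Fin.cases ?_ (fun j => ?_) i
    · simp only [Pi.add_apply, Pi.smul_apply, consMap_zero, smul_eq_mul]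
      rw [← add_mul, hab, one_mul]
    · simp [smul_eq_mul]
  simp only [Set.mem_preimage] at h₁ h₂ ⊢
  rw [key]
  exact hK h₁ h₂ ha hb hab

end WeakNetAux



namespace WeakNetAux



noncomputable def chordMap (t : ℝ) : ((Fin (d+1) → ℝ) × (Fin (d+1) → ℝ)) → (Fin d → ℝ) :=
  fun p j => p.1 j.succ + ((t - p.1 0)/(p.2 0 - p.1 0)) * (p.2 j.succ - p.1 j.succ)

lemma measurable_chordMap (t : ℝ) :
    Measurable (chordMap t : ((Fin (d+1) → ℝ) × (Fin (d+1) → ℝ)) → (Fin d → ℝ)) := by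
  refine measurable_pi_lambda _ fun j => ?_
  have h1 : Measurable fun p : (Fin (d+1) → ℝ) × (Fin (d+1) → ℝ) => p.1 j.succ :=
    (measurable_pi_apply _).comp measurable_fst
  have h2 : Measurable fun p : (Fin (d+1) → ℝ) × (Fin (d+1) → ℝ) => p.2 j.succ :=
    (measurable_pi_apply _).comp measurable_snd
  have h3 : Measurable fun p : (Fin (d+1) → ℝ) × (Fin (d+1) → ℝ) => p.1 0 :=
    (measurable_pi_apply _).comp measurable_fst
  have h4 : Measurable fun p : (Fin (d+1) → ℝ) × (Fin (d+1) → ℝ) => p.2 0 :=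
    (measurable_pi_apply _).comp measurable_snd
  exact h1.add (((measurable_const.sub h3).div (h4.sub h3)).mul (h2.sub h1))

lemma chord_mem {t : ℝ} {K : Set (Fin (d+1) → ℝ)} (hK : Convex ℝ K)
    {a b : Fin (d+1) → ℝ} (ha : a ∈ K) (hb : b ∈ K) (ha0 : a 0 < t) (hb0 : t < b 0) :
    consMap t (chordMap t (a, b)) ∈ K := by
  set s : ℝ := (t - a 0)/(b 0 - a 0) with hs
  have hd0 : (0:ℝ) < b 0 - a 0 := by linarith
  have hs0 : 0 ≤ s := div_nonneg (by linarith) hd0.le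
  have hs1 : s ≤ 1 := by
    rw [hs, div_le_one hd0]; linarith
  have hkey : consMap t (chordMap t (a, b)) = (1 - s) • a + s • b := by
    funext i
    refine Fin.cases ?_ (fun j => ?_) i
    · show t = (1 - s) * a 0 + s * b 0
      have hmul : s * (b 0 - a 0) = t - a 0 := div_mul_cancel₀ _ hd0.ne'
      linear_combination -hmul
    · show a j.succ + s * (b j.succ - a j.succ) = (1 - s) * a j.succ + s * b j.succ
      ring
  rw [hkey]
  exact hK ha hb (by linarith) hs0 (by ring)

end WeakNetAux



namespace WeakNetAux2

variable {α : Type*} [MeasurableSpace α] {μ : Measure α} {f : α → ℝ}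

lemma decomp3 (hf : Measurable f) (K : Set α) (c : ℝ) :
    μ K = μ (K ∩ {x | f x < c}) + μ (K ∩ {x | f x = c}) + μ (K ∩ {x | c < f x}) := by
  have h1 := measure_inter_add_diff (μ := μ) (t := {x | f x < c}) K
    (measurableSet_lt hf measurable_const)
  have e1 : K \ {x | f x < c} = K ∩ {x | c ≤ f x} := by
    ext x; simp [not_lt]
  have h2 := measure_inter_add_diff (μ := μ) (t := {x | f x ≤ c}) (K ∩ {x | c ≤ f x})
    (measurableSet_le hf measurable_const)
  have e2 : (K ∩ {x | c ≤ f x}) ∩ {x | f x ≤ c} = K ∩ {x | f x = c} := by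
    ext x
    simp only [mem_inter_iff, mem_setOf_eq, and_assoc]
    exact ⟨fun ⟨h, h1, h2⟩ => ⟨h, le_antisymm h2 h1⟩, fun ⟨h, h'⟩ => ⟨h, h'.ge, h'.le⟩⟩
  have e3 : (K ∩ {x | c ≤ f x}) \ {x | f x ≤ c} = K ∩ {x | c < f x} := by
    ext x
    simp only [mem_diff, mem_inter_iff, mem_setOf_eq, not_le, and_assoc]
    exact ⟨fun ⟨h, _, h2⟩ => ⟨h, h2⟩, fun ⟨h, h'⟩ => ⟨h, h'.le, h'⟩⟩
  rw [e1] at h1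
  rw [e2, e3] at h2
  rw [← h1, ← h2, add_assoc]

lemma decomp5 (hf : Measurable f) (K : Set α) {c₁ c₂ : ℝ} (hc : c₁ < c₂) :
    μ K = μ (K ∩ {x | f x < c₁}) + μ (K ∩ {x | f x = c₁}) +
      (μ ((K ∩ {x | c₁ < f x}) ∩ {x | f x < c₂}) + μ (K ∩ {x | f x = c₂}) +
       μ (K ∩ {x | c₂ < f x})) := by
  rw [decomp3 (μ := μ) hf K c₁]
  congr 1
  rw [decomp3 (μ := μ) hf (K ∩ {x | c₁ < f x}) c₂]
  have e1 : (K ∩ {x | c₁ < f x}) ∩ {x | f x = c₂} = K ∩ {x | f x = c₂} := by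
    ext x
    simp only [mem_inter_iff, mem_setOf_eq, and_assoc]
    exact ⟨fun ⟨h, _, h2⟩ => ⟨h, h2⟩, fun ⟨h, h'⟩ => ⟨h, h' ▸ hc, h'⟩⟩
  have e2 : (K ∩ {x | c₁ < f x}) ∩ {x | c₂ < f x} = K ∩ {x | c₂ < f x} := by
    ext x
    simp only [mem_inter_iff, mem_setOf_eq, and_assoc]
    exact ⟨fun ⟨h, _, h2⟩ => ⟨h, h2⟩, fun ⟨h, h'⟩ => ⟨h, hc.trans h', h'⟩⟩
  rw [e1, e2]

/-- Selection of a good level. -/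
lemma exists_good_level (hf : Measurable f) [IsFiniteMeasure μ]
    {δ : ℝ} (hδ : 0 < δ) {m : ℕ} (hm1 : 1 ≤ m) {t : ℕ → ℝ}
    (hmono : ∀ j k, 1 ≤ j → j ≤ k → k ≤ m → t j ≤ t k)
    (hP1 : ∀ k, 1 ≤ k → k ≤ m → ENNReal.ofReal (k * δ) ≤ μ {x | f x ≤ t k})
    (hP2 : ∀ k, 1 ≤ k → k ≤ m → μ {x | f x < t k} ≤ ENNReal.ofReal (k * δ))
    (hP4 : μ {x | t m < f x} ≤ ENNReal.ofReal δ)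
    {K : Set α} (hKμ : ENNReal.ofReal (8 * δ) ≤ μ K) :
    ∃ k, 1 ≤ k ∧ k ≤ m ∧ (ENNReal.ofReal δ ≤ μ (K ∩ {x | f x = t k}) ∨
      (ENNReal.ofReal δ ≤ μ (K ∩ {x | f x < t k}) ∧
       ENNReal.ofReal δ ≤ μ (K ∩ {x | t k < f x}))) := by
  classical
  by_contra hcon
  push_neg at hcon
  have hδ' : (0:ℝ≥0∞) < ENNReal.ofReal δ := ENNReal.ofReal_pos.2 hδ
  have sum3 : ∀ u v w : ℝ≥0∞, u ≤ ENNReal.ofReal δ → v ≤ ENNReal.ofReal δ →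
      w ≤ ENNReal.ofReal δ → ¬ (ENNReal.ofReal (8*δ) ≤ u + v + w) := by
    intro u v w hu hv hw hle
    have h2 : ENNReal.ofReal (8*δ) ≤ ENNReal.ofReal δ + ENNReal.ofReal δ + ENNReal.ofReal δ :=
      hle.trans (by gcongr)
    rw [← ENNReal.ofReal_add (by positivity) (by positivity),
        ← ENNReal.ofReal_add (by positivity) (by positivity),
        ENNReal.ofReal_le_ofReal_iff (by positivity)] at h2
    linarith
  by_cases hPm : ENNReal.ofReal δ ≤ μ (K ∩ {x | f x < t m})
  · -- take the least k with a large left part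
    have hexQ : ∃ k, 1 ≤ k ∧ k ≤ m ∧ ENNReal.ofReal δ ≤ μ (K ∩ {x | f x < t k}) :=
      ⟨m, hm1, le_rfl, hPm⟩
    have Hspec := Nat.find_spec hexQ
    have Hmin : ∀ j, j < Nat.find hexQ →
        ¬ (1 ≤ j ∧ j ≤ m ∧ ENNReal.ofReal δ ≤ μ (K ∩ {x | f x < t j})) :=
      fun j hj => Nat.find_min hexQ hj
    generalize hg : Nat.find hexQ = k₀ at Hspec Hmin
    obtain ⟨hk₀1, hk₀m, hk₀P⟩ := Hspec
    rcases hcon k₀ hk₀1 hk₀m with ⟨hatom, hlr⟩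
    have hcright : μ (K ∩ {x | t k₀ < f x}) < ENNReal.ofReal δ := hlr hk₀P
    rcases eq_or_lt_of_le hk₀1 with h1 | h2
    · -- k₀ = 1 : left part is below the first quantile
      have ha : μ (K ∩ {x | f x < t k₀}) ≤ ENNReal.ofReal δ := by
        refine (measure_mono inter_subset_right).trans ?_
        have h := hP2 k₀ hk₀1 hk₀m
        rw [← h1] at h ⊢
        simpa using h
      exact sum3 _ _ _ ha hatom.le hcright.le ((decomp3 (μ := μ) hf K (t k₀)) ▸ hKμ)
    · -- k₀ ≥ 2
      set j := k₀ - 1 with hjdef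
      have hj1 : 1 ≤ j := by omega
      have hjm : j ≤ m := by omega
      have hjk : j < k₀ := by omega
      have hQj : ¬ (1 ≤ j ∧ j ≤ m ∧ ENNReal.ofReal δ ≤ μ (K ∩ {x | f x < t j})) :=
        Hmin j hjk
      have hleftj : μ (K ∩ {x | f x < t j}) < ENNReal.ofReal δ := by
        by_contra h
        exact hQj ⟨hj1, hjm, not_lt.1 h⟩
      rcases hcon j hj1 hjm with ⟨hatomj, _⟩
      rcases eq_or_lt_of_le (hmono j k₀ hj1 hjk.le hk₀m) with he | ht
      · rw [he] at hleftj
        exact absurd hk₀P (not_le.2 hleftj)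
      · -- the middle strip has small measure
        have hstrip : μ ({x | f x < t k₀} \ {x | f x ≤ t j}) ≤ ENNReal.ofReal δ := by
          have hsub : {x | f x ≤ t j} ⊆ {x | f x < t k₀} := fun x hx =>
            lt_of_le_of_lt hx ht
          rw [measure_diff hsub (measurableSet_le hf measurable_const).nullMeasurableSet
            (measure_ne_top μ _)]
          rw [tsub_le_iff_right]
          refine (hP2 k₀ hk₀1 hk₀m).trans ?_
          have hkj : (k₀ : ℝ) * δ = δ + (j : ℝ) * δ := by
            have : (k₀ : ℝ) = (j : ℝ) + 1 := by
              have : k₀ = j + 1 := by omega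
              rw [this]; push_cast; ring
            rw [this]; ring
          rw [hkj, ENNReal.ofReal_add hδ.le (by positivity)]
          exact add_le_add le_rfl (hP1 j hj1 hjm)
        have hmid : μ ((K ∩ {x | t j < f x}) ∩ {x | f x < t k₀}) ≤ ENNReal.ofReal δ := by
          refine (measure_mono ?_).trans hstrip
          rintro x ⟨⟨-, hx1⟩, hx2⟩
          exact ⟨hx2, by simpa [not_le] using hx1⟩
        have hdec := decomp5 (μ := μ) hf K ht
        rw [hdec] at hKμ
        -- now bound the five pieces
        have h5 : μ (K ∩ {x | f x < t j}) + μ (K ∩ {x | f x = t j}) +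
            (μ ((K ∩ {x | t j < f x}) ∩ {x | f x < t k₀}) + μ (K ∩ {x | f x = t k₀}) +
             μ (K ∩ {x | t k₀ < f x})) ≤ ENNReal.ofReal (5 * δ) := by
          have : (5:ℝ) * δ = δ + δ + (δ + δ + δ) := by ring
          rw [this, ENNReal.ofReal_add (by positivity) (by positivity),
              ENNReal.ofReal_add (by positivity) (by positivity),
              ENNReal.ofReal_add (by positivity) (by positivity),
              ENNReal.ofReal_add (by positivity) (by positivity)]
          exact add_le_add (add_le_add hleftj.le hatomj.le)
            (add_le_add (add_le_add hmid hatom.le) hcright.le)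
        have h58 := hKμ.trans h5
        rw [ENNReal.ofReal_le_ofReal_iff (by positivity)] at h58
        linarith
  · -- everything concentrates at / right of t m
    rcases hcon m hm1 le_rfl with ⟨hatom, -⟩
    have hc : μ (K ∩ {x | t m < f x}) ≤ ENNReal.ofReal δ :=
      (measure_mono inter_subset_right).trans hP4
    exact sum3 _ _ _ (not_le.1 hPm).le hatom.le hc
      ((decomp3 (μ := μ) hf K (t m)) ▸ hKμ)

end WeakNetAux2



namespace WeakNetAux3

variable {α : Type*} [MeasurableSpace α] {μ : Measure α} {f : α → ℝ}

lemma exists_quantiles (hf : Measurable f) [IsProbabilityMeasure μ]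
    {δ : ℝ} (hδ : 0 < δ) {m : ℕ} (hm1 : 1 ≤ m)
    (hmδ : (m:ℝ) * δ < 1) (hm2 : 1 ≤ ((m:ℝ)+1) * δ) :
    ∃ t : ℕ → ℝ,
      (∀ j k, 1 ≤ j → j ≤ k → k ≤ m → t j ≤ t k) ∧
      (∀ k, 1 ≤ k → k ≤ m → ENNReal.ofReal (k * δ) ≤ μ {x | f x ≤ t k}) ∧
      (∀ k, 1 ≤ k → k ≤ m → μ {x | f x < t k} ≤ ENNReal.ofReal (k * δ)) ∧
      μ {x | t m < f x} ≤ ENNReal.ofReal δ := by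
  classical
  set S : ℕ → Set ℝ := fun k => {r | ENNReal.ofReal (k * δ) ≤ μ {x | f x ≤ r}} with hS
  have hup : ∀ k r r', r ∈ S k → r ≤ r' → r' ∈ S k := by
    intro k r r' hr hrr'
    exact hr.trans (measure_mono fun x hx => le_trans hx hrr')
  have hSne : ∀ k, k ≤ m → (S k).Nonempty := by
    intro k hk
    have hmon : Monotone fun n : ℕ => {x | f x ≤ (n:ℝ)} := by
      intro a b hab x hx
      simp only [mem_setOf_eq] at hx ⊢
      have : (a:ℝ) ≤ (b:ℝ) := by exact_mod_cast hab
      linarith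
    have hun : (⋃ n : ℕ, {x | f x ≤ (n:ℝ)}) = univ := by
      ext x; simp only [mem_iUnion, mem_setOf_eq, mem_univ, iff_true]
      obtain ⟨n, hn⟩ := exists_nat_ge (f x)
      exact ⟨n, hn⟩
    have hiSup : (⨆ n : ℕ, μ {x | f x ≤ (n:ℝ)}) = 1 := by
      rw [← hmon.measure_iUnion, hun, measure_univ]
    have hlt : ENNReal.ofReal (k * δ) < 1 := by
      refine ENNReal.ofReal_lt_one.2 ?_
      have : (k:ℝ) * δ ≤ (m:ℝ) * δ := by
        have : (k:ℝ) ≤ (m:ℝ) := by exact_mod_cast hk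
        nlinarith
      linarith
    rw [← hiSup] at hlt
    obtain ⟨n, hn⟩ := lt_iSup_iff.1 hlt
    exact ⟨n, hn.le⟩
  have hbdd : ∀ k, 1 ≤ k → BddBelow (S k) := by
    intro k hk
    have hanti : Antitone fun n : ℕ => {x | f x ≤ -(n:ℝ)} := by
      intro a b hab x hx
      simp only [mem_setOf_eq] at hx ⊢
      have : (a:ℝ) ≤ (b:ℝ) := by exact_mod_cast hab
      linarith
    have hempty : (⋂ n : ℕ, {x | f x ≤ -(n:ℝ)}) = (∅ : Set α) := by
      ext x
      simp only [mem_iInter, mem_setOf_eq, mem_empty_iff_false, iff_false, not_forall, not_le]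
      obtain ⟨n, hn⟩ := exists_nat_gt (-(f x))
      exact ⟨n, by linarith⟩
    have htd : Tendsto (fun n : ℕ => μ {x | f x ≤ -(n:ℝ)}) atTop (𝓝 0) := by
      have h := tendsto_measure_iInter_atTop
        (μ := μ) (s := fun n : ℕ => {x | f x ≤ -(n:ℝ)})
        (fun n => (measurableSet_le hf measurable_const).nullMeasurableSet) hanti
        ⟨0, measure_ne_top μ _⟩
      rwa [hempty, measure_empty] at h
    have hev : ∀ᶠ n : ℕ in atTop, μ {x | f x ≤ -(n:ℝ)} < ENNReal.ofReal δ :=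
      htd.eventually_lt_const (ENNReal.ofReal_pos.2 hδ)
    obtain ⟨n₀, hn₀⟩ := hev.exists
    refine ⟨-(n₀:ℝ), fun r hr => ?_⟩
    by_contra hcon
    push_neg at hcon
    have h1 : μ {x | f x ≤ r} ≤ μ {x | f x ≤ -(n₀:ℝ)} :=
      measure_mono fun x hx => le_trans hx hcon.le
    have h2 : ENNReal.ofReal δ ≤ ENNReal.ofReal (k * δ) := by
      refine ENNReal.ofReal_le_ofReal ?_
      have : (1:ℝ) ≤ (k:ℝ) := by exact_mod_cast hk
      nlinarith
    exact absurd ((h2.trans hr).trans h1) (not_le.2 hn₀)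
  let t : ℕ → ℝ := fun k => sInf (S k)
  have ht : ∀ k, t k = sInf (S k) := fun _ => rfl
  have hmono : ∀ j k, 1 ≤ j → j ≤ k → k ≤ m → t j ≤ t k := by
    intro j k hj hjk hkm
    refine csInf_le_csInf (hbdd j hj) (hSne k hkm) ?_
    intro r hr
    refine le_trans (ENNReal.ofReal_le_ofReal ?_) hr
    have : (j:ℝ) ≤ (k:ℝ) := by exact_mod_cast hjk
    nlinarith
  have hP1 : ∀ k, 1 ≤ k → k ≤ m → ENNReal.ofReal (k * δ) ≤ μ {x | f x ≤ t k} := by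
    intro k hk1 hkm
    have hanti : Antitone fun n : ℕ => {x | f x ≤ t k + 1/((n:ℝ)+1)} := by
      intro a b hab x hx
      simp only [mem_setOf_eq] at hx ⊢
      have h1 : 1/((b:ℝ)+1) ≤ 1/((a:ℝ)+1) := by
        apply one_div_le_one_div_of_le
        · positivity
        · have : (a:ℝ) ≤ (b:ℝ) := by exact_mod_cast hab
          linarith
      linarith
    have hiInter : (⋂ n : ℕ, {x | f x ≤ t k + 1/((n:ℝ)+1)}) = {x | f x ≤ t k} := by
      ext x
      simp only [mem_iInter, mem_setOf_eq]
      constructor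
      · intro h
        by_contra hcon
        push_neg at hcon
        obtain ⟨n, hn⟩ := exists_nat_one_div_lt (show (0:ℝ) < f x - t k by linarith)
        have := h n
        linarith
      · intro h n
        have : (0:ℝ) < 1/((n:ℝ)+1) := by positivity
        linarith
    have htd := tendsto_measure_iInter_atTop
      (μ := μ) (s := fun n : ℕ => {x | f x ≤ t k + 1/((n:ℝ)+1)})
      (fun n => (measurableSet_le hf measurable_const).nullMeasurableSet) hanti
      ⟨0, measure_ne_top μ _⟩
    rw [hiInter] at htd
    refine ge_of_tendsto htd (Eventually.of_forall fun n => ?_)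
    have hmem : t k + 1/((n:ℝ)+1) ∈ S k := by
      have hpos : (0:ℝ) < 1/((n:ℝ)+1) := by positivity
      obtain ⟨s, hsS, hs⟩ := exists_lt_of_csInf_lt (hSne k hkm)
        (show sInf (S k) < t k + 1/((n:ℝ)+1) by rw [ht]; linarith)
      exact hup k s _ hsS hs.le
    exact hmem
  have hP2 : ∀ k, 1 ≤ k → k ≤ m → μ {x | f x < t k} ≤ ENNReal.ofReal (k * δ) := by
    intro k hk1 hkm
    have hmon : Monotone fun n : ℕ => {x | f x ≤ t k - 1/((n:ℝ)+1)} := by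
      intro a b hab x hx
      simp only [mem_setOf_eq] at hx ⊢
      have h1 : 1/((b:ℝ)+1) ≤ 1/((a:ℝ)+1) := by
        apply one_div_le_one_div_of_le
        · positivity
        · have : (a:ℝ) ≤ (b:ℝ) := by exact_mod_cast hab
          linarith
      linarith
    have hun : (⋃ n : ℕ, {x | f x ≤ t k - 1/((n:ℝ)+1)}) = {x | f x < t k} := by
      ext x
      simp only [mem_iUnion, mem_setOf_eq]
      constructor
      · rintro ⟨n, hn⟩
        have : (0:ℝ) < 1/((n:ℝ)+1) := by positivity
        linarith
      · intro h
        obtain ⟨n, hn⟩ := exists_nat_one_div_lt (show (0:ℝ) < t k - f x by linarith)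
        exact ⟨n, by linarith⟩
    rw [← hun, hmon.measure_iUnion]
    refine iSup_le fun n => ?_
    have hnot : t k - 1/((n:ℝ)+1) ∉ S k := by
      intro hmem
      have h2 := csInf_le (hbdd k hk1) hmem
      rw [← ht] at h2
      have hpos : (0:ℝ) < 1/((n:ℝ)+1) := by positivity
      linarith
    have : ¬ ENNReal.ofReal (k * δ) ≤ μ {x | f x ≤ t k - 1/((n:ℝ)+1)} := hnot
    exact (not_le.1 this).le
  have hP4 : μ {x | t m < f x} ≤ ENNReal.ofReal δ := by
    have hcompl : {x | t m < f x} = {x | f x ≤ t m}ᶜ := by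
      ext x; simp [not_le]
    rw [hcompl, measure_compl (measurableSet_le hf measurable_const) (measure_ne_top μ _),
      measure_univ]
    rw [tsub_le_iff_right]
    calc (1:ℝ≥0∞) = ENNReal.ofReal 1 := by simp
    _ ≤ ENNReal.ofReal (δ + (m:ℝ) * δ) := by
        refine ENNReal.ofReal_le_ofReal ?_
        nlinarith
    _ = ENNReal.ofReal δ + ENNReal.ofReal ((m:ℝ) * δ) := by
        rw [ENNReal.ofReal_add hδ.le (by positivity)]
    _ ≤ ENNReal.ofReal δ + μ {x | f x ≤ t m} := by
        exact add_le_add le_rfl (hP1 m hm1 le_rfl)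
  exact ⟨t, hmono, hP1, hP2, hP4⟩

end WeakNetAux3



namespace WeakNet

/-- The weak-net statement for dimension `n`, level `ε`, and bound `c`. -/
def NetStmt (n : ℕ) (ε : ℝ) (c : ℕ) : Prop :=
  ∀ μ : Measure (Fin n → ℝ), IsProbabilityMeasure μ →
    ∃ X : Finset (Fin n → ℝ), X.card ≤ c ∧
      ∀ K : Set (Fin n → ℝ), IsCompact K → Convex ℝ K →
        ENNReal.ofReal ε ≤ μ K → ∃ x ∈ X, x ∈ K

/-- The corresponding statement for sub-probability measures. -/
def SubNet (n : ℕ) (ε : ℝ) (c : ℕ) : Prop :=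
  ∀ ν : Measure (Fin n → ℝ), ν Set.univ ≤ 1 →
    ∃ X : Finset (Fin n → ℝ), X.card ≤ c ∧
      ∀ K : Set (Fin n → ℝ), IsCompact K → Convex ℝ K →
        ENNReal.ofReal ε ≤ ν K → ∃ x ∈ X, x ∈ K

lemma subNet_of_netStmt {n : ℕ} {ε : ℝ} (hε : 0 < ε) {c : ℕ} (h : NetStmt n ε c) :
    SubNet n ε c := by
  intro ν hν
  by_cases h0 : ENNReal.ofReal ε ≤ ν Set.univ
  · have hν0 : ν Set.univ ≠ 0 := ((ENNReal.ofReal_pos.2 hε).trans_le h0).ne'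
    have hνtop : ν Set.univ ≠ ⊤ := (lt_of_le_of_lt hν ENNReal.one_lt_top).ne
    have hP : IsProbabilityMeasure ((ν Set.univ)⁻¹ • ν) :=
      ⟨by rw [Measure.smul_apply, smul_eq_mul, ENNReal.inv_mul_cancel hν0 hνtop]⟩
    obtain ⟨X, hXc, hX⟩ := h ((ν Set.univ)⁻¹ • ν) hP
    refine ⟨X, hXc, fun K hc hco hK => hX K hc hco ?_⟩
    have hle : ν K ≤ ((ν Set.univ)⁻¹ • ν) K := by
      rw [Measure.smul_apply, smul_eq_mul]
      conv_lhs => rw [← one_mul (ν K)]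
      exact mul_le_mul' (ENNReal.one_le_inv.2 hν) le_rfl
    exact le_trans hK hle
  · refine ⟨∅, by simp, fun K hc hco hK => ?_⟩
    exact absurd (hK.trans (measure_mono (subset_univ K))) h0

lemma main : ∀ (n : ℕ) (ε : ℝ), 0 < ε → ∃ c : ℕ, NetStmt n ε c := by
  intro n
  induction n with
  | zero =>
    intro ε hε
    refine ⟨1, fun μ hμ => ⟨{fun _ => 0}, by simp, fun K hKc hKconv hKμ => ?_⟩⟩
    have hKne : K.Nonempty := by
      by_contra h
      rw [not_nonempty_iff_eq_empty] at h
      rw [h, measure_empty] at hKμ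
      exact absurd ((ENNReal.ofReal_pos.2 hε).trans_le hKμ) (lt_irrefl 0)
    obtain ⟨y, hy⟩ := hKne
    have hxy : (fun _ => 0 : Fin 0 → ℝ) = y := Subsingleton.elim _ _
    exact ⟨_, Finset.mem_singleton_self _, hxy ▸ hy⟩
  | succ d IH =>
    intro ε hε
    by_cases hε1 : 1 < ε
    · refine ⟨0, fun μ hμ => ⟨∅, by simp, fun K hKc hKconv hKμ => absurd hKμ ?_⟩⟩
      have h1 : μ K ≤ 1 := prob_le_one
      have h2 : (1:ℝ≥0∞) < ENNReal.ofReal ε := by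
        rw [show (1:ℝ≥0∞) = ENNReal.ofReal 1 by simp]
        exact ENNReal.ofReal_lt_ofReal_iff hε |>.2 hε1
      exact not_le.2 (lt_of_le_of_lt h1 h2)
    push_neg at hε1
    classical
    set δ : ℝ := ε / 8 with hδdef
    have hδ : 0 < δ := by positivity
    have hδ8 : 8 * δ = ε := by rw [hδdef]; ring
    obtain ⟨c1, hc1⟩ := IH δ hδ
    obtain ⟨c2, hc2⟩ := IH (δ * δ) (by positivity)
    have h1' : SubNet d δ c1 := subNet_of_netStmt hδ hc1
    have h2' : SubNet d (δ * δ) c2 := subNet_of_netStmt (by positivity) hc2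
    set M : ℕ := ⌈1/δ⌉₊ with hMdef
    have h8M : 8 ≤ M := by
      have h8 : (8:ℝ) ≤ 1/δ := by
        rw [le_div_iff₀ hδ]
        linarith
      calc (8:ℕ) = ⌈(8:ℝ)⌉₊ := by simp
      _ ≤ M := Nat.ceil_le_ceil h8
    set m : ℕ := M - 1 with hmdef
    have hm1 : 1 ≤ m := by omega
    have hmcast : (m:ℝ) = (M:ℝ) - 1 := by
      have hM1 : 1 ≤ M := by omega
      rw [hmdef, Nat.cast_sub hM1, Nat.cast_one]
    have hMlt : (M:ℝ) < 1/δ + 1 := Nat.ceil_lt_add_one (by positivity)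
    have hmδ : (m:ℝ) * δ < 1 := by
      have hmlt : (m:ℝ) < 1/δ := by rw [hmcast]; linarith
      have := mul_lt_mul_of_pos_right hmlt hδ
      rwa [div_mul_cancel₀ _ hδ.ne'] at this
    have hm2 : 1 ≤ ((m:ℝ) + 1) * δ := by
      have hMge : 1/δ ≤ (M:ℝ) := Nat.le_ceil _
      have : (1/δ) * δ ≤ ((m:ℝ) + 1) * δ := by
        apply mul_le_mul_of_nonneg_right _ hδ.le
        rw [hmcast]; linarith
      rwa [div_mul_cancel₀ _ hδ.ne'] at this
    refine ⟨(Finset.Icc 1 m).card * (c1 + c2), ?_⟩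
    intro μ hμ
    haveI := hμ
    have hf : Measurable fun x : Fin (d+1) → ℝ => x 0 := measurable_pi_apply 0
    obtain ⟨t, hmono, hQ1, hQ2, hQ4⟩ :=
      WeakNetAux3.exists_quantiles (μ := μ) hf hδ hm1 hmδ hm2
    -- the slice measures
    set ν : ℕ → Measure (Fin d → ℝ) := fun k =>
      Measure.map Fin.tail (μ.restrict {x | x 0 = t k}) with hνdef
    set σ : ℕ → Measure (Fin d → ℝ) := fun k =>
      Measure.map (WeakNetAux.chordMap (t k))
        ((μ.restrict {x | x 0 < t k}).prod (μ.restrict {x | t k < x 0})) with hσdef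
    have hνle : ∀ k, ν k Set.univ ≤ 1 := by
      intro k
      rw [hνdef]
      rw [Measure.map_apply WeakNetAux.measurable_tail MeasurableSet.univ,
        Set.preimage_univ, Measure.restrict_apply_univ]
      exact prob_le_one
    have hσle : ∀ k, σ k Set.univ ≤ 1 := by
      intro k
      rw [hσdef]
      rw [Measure.map_apply (WeakNetAux.measurable_chordMap _) MeasurableSet.univ,
        Set.preimage_univ, ← Set.univ_prod_univ, Measure.prod_prod,
        Measure.restrict_apply_univ, Measure.restrict_apply_univ]
      calc μ {x | x 0 < t k} * μ {x | t k < x 0} ≤ 1 * 1 :=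
        mul_le_mul' prob_le_one prob_le_one
      _ = 1 := one_mul 1
    choose X1 hX1c hX1 using fun k => h1' (ν k) (hνle k)
    choose X2 hX2c hX2 using fun k => h2' (σ k) (hσle k)
    refine ⟨(Finset.Icc 1 m).biUnion (fun k =>
      (X1 k).image (WeakNetAux.consMap (t k)) ∪ (X2 k).image (WeakNetAux.consMap (t k))),
      ?_, ?_⟩
    · calc _ ≤ ∑ k ∈ Finset.Icc 1 m,
          ((X1 k).image (WeakNetAux.consMap (t k)) ∪
           (X2 k).image (WeakNetAux.consMap (t k))).card := Finset.card_biUnion_le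
      _ ≤ ∑ _k ∈ Finset.Icc 1 m, (c1 + c2) := by
          refine Finset.sum_le_sum fun k _ => ?_
          refine (Finset.card_union_le _ _).trans ?_
          exact add_le_add (Finset.card_image_le.trans (hX1c k))
            (Finset.card_image_le.trans (hX2c k))
      _ = (Finset.Icc 1 m).card * (c1 + c2) := by
          rw [Finset.sum_const, smul_eq_mul]
    · intro K hKc hKconv hKμ
      have hKμ8 : ENNReal.ofReal (8 * δ) ≤ μ K := by rwa [hδ8]
      obtain ⟨k, hk1, hkm, hcase⟩ :=
        WeakNetAux2.exists_good_level (μ := μ) hf hδ hm1 hmono hQ1 hQ2 hQ4 hKμ8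
      -- the slice of K at level t k
      set K'' : Set (Fin d → ℝ) := WeakNetAux.consMap (t k) ⁻¹' K with hK''def
      have hK''eq : K'' = WeakNetAux.consMap (t k) ⁻¹' K := rfl
      have hK''c : IsCompact K'' := by
        rw [hK''eq]; exact WeakNetAux.cons_preimage_compact _ hKc
      have hK''conv : Convex ℝ K'' := by
        rw [hK''eq]; exact WeakNetAux.cons_preimage_convex _ hKconv
      have hK''m : MeasurableSet K'' :=
        (hKc.isClosed.preimage (WeakNetAux.continuous_cons (t k))).measurableSet
      have hmemX : ∀ y ∈ K'', WeakNetAux.consMap (t k) y ∈ K := fun y hy => hy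
      rcases hcase with hatom | ⟨hL, hR⟩
      · -- atom case
        have hbound : ENNReal.ofReal δ ≤ ν k K'' := by
          rw [hνdef]
          rw [Measure.map_apply WeakNetAux.measurable_tail hK''m,
            Measure.restrict_apply (WeakNetAux.measurable_tail hK''m)]
          refine hatom.trans (measure_mono ?_)
          rintro x ⟨hxK, hx0⟩
          refine ⟨?_, hx0⟩
          show Fin.tail x ∈ K''
          rw [hK''eq, Set.mem_preimage, WeakNetAux.consMap_tail hx0]
          exact hxK
        obtain ⟨y, hyX, hyK⟩ := hX1 k K'' hK''c hK''conv hbound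
        refine ⟨WeakNetAux.consMap (t k) y, ?_, hmemX y hyK⟩
        refine Finset.mem_biUnion.2 ⟨k, Finset.mem_Icc.2 ⟨hk1, hkm⟩, ?_⟩
        exact Finset.mem_union_left _ (Finset.mem_image_of_mem _ hyX)
      · -- chord case
        have hbound : ENNReal.ofReal (δ * δ) ≤ σ k K'' := by
          rw [hσdef]
          rw [Measure.map_apply (WeakNetAux.measurable_chordMap _) hK''m]
          have hsub : (K ∩ {x | x 0 < t k}) ×ˢ (K ∩ {x | t k < x 0}) ⊆
              WeakNetAux.chordMap (t k) ⁻¹' K'' := by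
            rintro ⟨a, b⟩ ⟨⟨haK, ha0⟩, hbK, hb0⟩
            show WeakNetAux.chordMap (t k) (a, b) ∈ K''
            rw [hK''def, Set.mem_preimage]
            exact WeakNetAux.chord_mem hKconv haK hbK ha0 hb0
          refine le_trans ?_ (measure_mono hsub)
          have hmeasL : MeasurableSet (K ∩ {x | x 0 < t k}) :=
            hKc.isClosed.measurableSet.inter (measurableSet_lt hf measurable_const)
          have hmeasR : MeasurableSet (K ∩ {x | t k < x 0}) :=
            hKc.isClosed.measurableSet.inter (measurableSet_lt measurable_const hf)
          rw [Measure.prod_prod, Measure.restrict_apply hmeasL, Measure.restrict_apply hmeasR]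
          have e1 : K ∩ {x | x 0 < t k} ∩ {x | x 0 < t k} = K ∩ {x | x 0 < t k} := by
            rw [inter_assoc, inter_self]
          have e2 : K ∩ {x | t k < x 0} ∩ {x | t k < x 0} = K ∩ {x | t k < x 0} := by
            rw [inter_assoc, inter_self]
          rw [e1, e2, ENNReal.ofReal_mul hδ.le]
          exact mul_le_mul' hL hR
        obtain ⟨y, hyX, hyK⟩ := hX2 k K'' hK''c hK''conv hbound
        refine ⟨WeakNetAux.consMap (t k) y, ?_, hmemX y hyK⟩
        refine Finset.mem_biUnion.2 ⟨k, Finset.mem_Icc.2 ⟨hk1, hkm⟩, ?_⟩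
        exact Finset.mem_union_right _ (Finset.mem_image_of_mem _ hyX)

end WeakNet

/-- For every ε > 0 and every d there is c = c(ε,d) such that for every probability
measure μ on ℝ^d there is a set of at most c points meeting every compact convex set
of μ-measure at least ε. -/
theorem weak_net_for_measures (ε : ℝ) (hε : 0 < ε) (d : ℕ) :
    ∃ c : ℕ, ∀ μ : Measure (Fin d → ℝ), IsProbabilityMeasure μ →
      ∃ X : Finset (Fin d → ℝ), X.card ≤ c ∧
        ∀ K : Set (Fin d → ℝ), IsCompact K → Convex ℝ K →
          ENNReal.ofReal ε ≤ μ K → ∃ x ∈ X, x ∈ K := by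
  obtain ⟨c, hc⟩ := WeakNet.main d ε hε
  exact ⟨c, hc⟩
end

section
/- For every 0 < α ≤ 1 and every dimension d there exists δ = δ(α,d) > 0 such that for every n ≥ d+1, any family of n convex sets in R^d containing at least α·C(n,d+1) intersecting subfamilies of size d+1 contains an intersecting subfamily of at least δn sets (fractional Helly theorem of Katchalski–Liu). -/
open Finset

noncomputable section
namespace FracHelly

variable {d : ℕ}

def Φ (x : Fin d → ℝ) : ℝ := ∑ i, (x i)^2

lemma Φ_continuous : Continuous (Φ (d := d)) := by
  unfold Φ; fun_prop

lemma Φ_combo {a b : ℝ} (ha : 0 ≤ a) (hb : 0 ≤ b) (hab : a + b = 1) (x y : Fin d → ℝ) :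
    Φ (a • x + b • y) ≤ a * Φ x + b * Φ y := by
  unfold Φ
  rw [Finset.mul_sum, Finset.mul_sum, ← Finset.sum_add_distrib]
  refine Finset.sum_le_sum fun i _ => ?_
  simp only [Pi.add_apply, Pi.smul_apply, smul_eq_mul]
  nlinarith [sq_nonneg (x i - y i), mul_nonneg ha hb]

lemma convex_sublevel (c : ℝ) : Convex ℝ {x : Fin d → ℝ | Φ x < c} := by
  intro x hx y hy a b ha hb hab
  exact lt_of_le_of_lt (Φ_combo ha hb hab x y)
    (by calc a * Φ x + b * Φ y < a * c + b * c := by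
              rcases ha.eq_or_lt with h | h
              · rcases hb.eq_or_lt with h' | h'
                · exfalso; rw [← h, ← h'] at hab; norm_num at hab
                · rw [← h]; simpa using (mul_lt_mul_of_pos_left hy h')
              · rcases hb.eq_or_lt with h' | h'
                · rw [← h']; simpa using (mul_lt_mul_of_pos_left hx h)
                · exact add_lt_add (mul_lt_mul_of_pos_left hx h) (mul_lt_mul_of_pos_left hy h')
        _ = c := by rw [← add_mul, hab, one_mul])

lemma Φ_pos {x : Fin d → ℝ} (hx : x ≠ 0) : 0 < Φ x := by
  have : ∃ i, x i ≠ 0 := by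
    by_contra h; push_neg at h; exact hx (funext h)
  obtain ⟨i, hi⟩ := this
  exact Finset.sum_pos' (fun j _ => sq_nonneg _) ⟨i, Finset.mem_univ i, by positivity⟩

lemma Φ_midpoint (v w : Fin d → ℝ) :
    Φ ((1/2 : ℝ) • v + (1/2 : ℝ) • w) = (Φ v + Φ w)/2 - Φ ((1/2 : ℝ) • (v - w)) := by
  unfold Φ
  rw [eq_sub_iff_add_eq, ← Finset.sum_add_distrib, eq_div_iff (two_ne_zero),
    Finset.sum_mul, ← Finset.sum_add_distrib]
  refine Finset.sum_congr rfl fun i _ => ?_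
  simp only [Pi.add_apply, Pi.smul_apply, Pi.sub_apply, smul_eq_mul]
  ring

/-- uniqueness of the minimizer of Φ on a convex set -/
lemma min_unique {K : Set (Fin d → ℝ)} (hK : Convex ℝ K) {v w : Fin d → ℝ}
    (hv : v ∈ K) (hw : w ∈ K) (hvmin : ∀ x ∈ K, Φ v ≤ Φ x) (hwmin : ∀ x ∈ K, Φ w ≤ Φ x) :
    v = w := by
  by_contra hne
  have hm : (1/2 : ℝ) • v + (1/2 : ℝ) • w ∈ K :=
    hK hv hw (by norm_num) (by norm_num) (by norm_num)
  have h1 := hvmin _ hm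
  have h2 := hwmin v hv
  have h3 := hvmin w hw
  have h4 := Φ_midpoint v w
  have h5 : 0 < Φ ((1/2 : ℝ) • (v - w)) := Φ_pos (by
    simp only [ne_eq, smul_eq_zero, sub_eq_zero]
    push_neg; exact ⟨by norm_num, hne⟩)
  linarith

variable {n : ℕ}

lemma drop {C : Fin n → Set (Fin d → ℝ)} (hC : ∀ i, Convex ℝ (C i))
    {S : Finset (Fin n)} (hS : S.card = d + 1) {v : Fin d → ℝ}
    (hv : v ∈ ⋂ i ∈ S, C i) (hmin : ∀ x ∈ ⋂ i ∈ S, C i, Φ v ≤ Φ x) :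
    ∃ i ∈ S, ∀ x ∈ ⋂ j ∈ S.erase i, C j, Φ v ≤ Φ x := by
  by_contra hcon
  push_neg at hcon
  choose q hq hqlt using hcon
  set e := S.orderIsoOfFin hS with he
  set g : Fin (d + 2) → (Fin d → ℝ) :=
    Fin.snoc (fun k : Fin (d + 1) => q (e k) (e k).2) v with hg
  have hglast : g (Fin.last (d + 1)) = v := Fin.snoc_last _ _
  have hgcast : ∀ k : Fin (d + 1), g (Fin.castSucc k) = q (e k) (e k).2 :=
    fun k => Fin.snoc_castSucc _ _ _
  have hnotai : ¬ AffineIndependent ℝ g := by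
    intro hai
    have h1 := hai.card_le_finrank_succ
    have h2 : Module.finrank ℝ (vectorSpan ℝ (Set.range g)) ≤ d := by
      calc Module.finrank ℝ (vectorSpan ℝ (Set.range g))
          ≤ Module.finrank ℝ (Fin d → ℝ) := Submodule.finrank_le _
        _ = d := by simp [Module.finrank_pi]
    simp only [Fintype.card_fin] at h1
    omega
  obtain ⟨I, p, hp1, hp2⟩ := Convex.radon_partition (𝕜 := ℝ) hnotai
  have key : ∀ A : Set (Fin (d + 2)), Fin.last (d + 1) ∈ A →
      p ∈ convexHull ℝ (g '' A) → p ∈ convexHull ℝ (g '' Aᶜ) → False := by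
    intro A hlast hpA hpAc
    have hAc_sub : ∀ z ∈ g '' Aᶜ, ∃ k' : Fin (d + 1),
        Fin.castSucc k' ∈ Aᶜ ∧ z = q (e k') (e k').2 := by
      rintro z ⟨m, hm, rfl⟩
      have hmne : m ≠ Fin.last (d + 1) := fun h => hm (h ▸ hlast)
      obtain ⟨k', rfl⟩ := Fin.exists_castSucc_eq.2 hmne
      exact ⟨k', hm, (hgcast k').symm ▸ rfl⟩
    -- q (e k') lies in C j whenever j ∈ S, j ≠ e k'
    have hqC : ∀ (k' : Fin (d + 1)) (j : Fin n), j ∈ S → j ≠ (e k' : Fin n) →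
        q (e k') (e k').2 ∈ C j := by
      intro k' j hj hne
      have h := hq (e k') (e k').2
      rw [Set.mem_iInter₂] at h
      exact h j (Finset.mem_erase.mpr ⟨hne, hj⟩)
    have hvC : ∀ j ∈ S, v ∈ C j := by
      intro j hj
      rw [Set.mem_iInter₂] at hv; exact hv j hj
    -- p lies in all C j, j ∈ S
    have hpS : p ∈ ⋂ j ∈ S, C j := by
      rw [Set.mem_iInter₂]
      intro j hj
      set k := e.symm ⟨j, hj⟩ with hk
      have hek : (e k : Fin n) = j := by rw [hk]; simp
      by_cases hkA : Fin.castSucc k ∈ A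
      · refine convexHull_min ?_ (hC j) hpAc
        rintro z hz
        obtain ⟨k', hk', rfl⟩ := hAc_sub z hz
        have hkk : k' ≠ k := fun h => hk' (h ▸ hkA)
        refine hqC k' j hj fun h => hkk ?_
        have hek' : e k' = ⟨j, hj⟩ := Subtype.ext h.symm
        rw [hk, ← hek', OrderIso.symm_apply_apply]
      · refine convexHull_min ?_ (hC j) hpA
        rintro z ⟨m, hm, rfl⟩
        by_cases hmne : m = Fin.last (d + 1)
        · rw [hmne, hglast]; exact hvC j hj
        · obtain ⟨k', rfl⟩ := Fin.exists_castSucc_eq.2 hmne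
          rw [hgcast]
          have hkk : k' ≠ k := fun h => hkA (h ▸ hm)
          refine hqC k' j hj fun h => hkk ?_
          have hek' : e k' = ⟨j, hj⟩ := Subtype.ext h.symm
          rw [hk, ← hek', OrderIso.symm_apply_apply]
    -- p has Φ p < Φ v
    have hplt : Φ p < Φ v := by
      have : p ∈ {x : Fin d → ℝ | Φ x < Φ v} := by
        refine convexHull_min ?_ (convex_sublevel _) hpAc
        rintro z hz
        obtain ⟨k', _, rfl⟩ := hAc_sub z hz
        exact hqlt (e k') (e k').2
      exact this
    exact absurd (hmin p hpS) (not_le.mpr hplt)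
  by_cases hlast : Fin.last (d + 1) ∈ I
  · exact key I hlast hp1 hp2
  · exact key Iᶜ hlast hp2 (by rw [compl_compl]; exact hp1)


lemma final_arith {α B c t nn dd ch : ℝ} (hα0 : 0 < α) (hch : 0 < ch)
    (hdd : 0 ≤ dd) (hdn : dd + 1 ≤ nn) (hid : B * (dd + 1) = ch * (nn - dd))
    (h1 : α * B ≤ ch * c) (hct : c ≤ t) : α / (dd + 1)^2 * nn ≤ t := by
  have hd1 : (0:ℝ) < dd + 1 := by linarith
  have h2 : α * (nn - dd) ≤ c * (dd + 1) := by
    have h3 := mul_le_mul_of_nonneg_right h1 hd1.le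
    rw [mul_assoc, hid] at h3
    have h4 : ch * (α * (nn - dd)) ≤ ch * (c * (dd + 1)) := by ring_nf at h3 ⊢; linarith
    exact le_of_mul_le_mul_left h4 hch
  have h4 : nn ≤ (nn - dd) * (dd + 1) := by nlinarith
  have h5 : α * nn ≤ c * (dd + 1)^2 := by
    calc α * nn ≤ α * ((nn - dd) * (dd + 1)) := mul_le_mul_of_nonneg_left h4 hα0.le
      _ = (α * (nn - dd)) * (dd + 1) := by ring
      _ ≤ (c * (dd + 1)) * (dd + 1) := mul_le_mul_of_nonneg_right h2 hd1.le
      _ = c * (dd + 1)^2 := by ring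
  calc α / (dd + 1)^2 * nn = (α * nn) / (dd + 1)^2 := by ring
    _ ≤ (c * (dd + 1)^2) / (dd + 1)^2 := by
        exact div_le_div_of_nonneg_right h5 (by positivity)
    _ = c := by field_simp
    _ ≤ t := hct

end FracHelly

/-- Fractional Helly (Katchalski–Liu): for 0 < α ≤ 1 and d there is δ > 0 such that any
family of n ≥ d+1 convex sets in ℝ^d with at least α·C(n,d+1) intersecting (d+1)-tuples
contains an intersecting subfamily of at least δn sets. -/
theorem fractional_helly (α : ℝ) (hα0 : 0 < α) (hα1 : α ≤ 1) (d : ℕ) :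
    ∃ δ : ℝ, 0 < δ ∧ ∀ n : ℕ, n ≥ d + 1 → ∀ F : Fin n → Set (Fin d → ℝ),
      (∀ i, Convex ℝ (F i)) →
      α * (n.choose (d + 1) : ℝ) ≤
        ({S : Finset (Fin n) | S.card = d + 1 ∧ (⋂ i ∈ S, F i).Nonempty}.ncard : ℝ) →
      ∃ S : Finset (Fin n), δ * n ≤ S.card ∧ (⋂ i ∈ S, F i).Nonempty := by
  classical
  refine ⟨α / ((d + 1 : ℝ))^2, by positivity, ?_⟩
  intro n hn F hFconv hcard
  open FracHelly in
  -- the finset of good (d+1)-subsets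
  set 𝒮 : Finset (Finset (Fin n)) :=
    Finset.univ.filter (fun S => S.card = d + 1 ∧ (⋂ i ∈ S, F i).Nonempty) with h𝒮
  have hset : {S : Finset (Fin n) | S.card = d + 1 ∧ (⋂ i ∈ S, F i).Nonempty} = ↑𝒮 := by
    ext S; simp [h𝒮]
  rw [hset, Set.ncard_coe_finset] at hcard
  have hScard : ∀ S ∈ 𝒮, S.card = d + 1 := fun S hS => ((Finset.mem_filter.1 hS).2).1
  have hSne : ∀ S ∈ 𝒮, (⋂ i ∈ S, F i).Nonempty := fun S hS => ((Finset.mem_filter.1 hS).2).2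
  -- choose points in the intersections
  choose p hp using hSne
  -- the polytope approximations
  set G : Fin n → Set (Fin d → ℝ) :=
    (fun i => convexHull ℝ {x | ∃ S, ∃ h : S ∈ 𝒮, i ∈ S ∧ p S h = x}) with hG
  have hbase_fin : ∀ i, {x | ∃ S, ∃ h : S ∈ 𝒮, i ∈ S ∧ p S h = x}.Finite := by
    intro i
    have : {x | ∃ S, ∃ h : S ∈ 𝒮, i ∈ S ∧ p S h = x} ⊆
        Set.range (fun Sh : {S // S ∈ 𝒮} => p Sh.1 Sh.2) := by
      rintro x ⟨S, h, _, rfl⟩; exact ⟨⟨S, h⟩, rfl⟩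
    exact (Set.finite_range _).subset this
  have hGcomp : ∀ i, IsCompact (G i) := fun i => (hbase_fin i).isCompact_convexHull ℝ
  have hGconv : ∀ i, Convex ℝ (G i) := fun i => convex_convexHull ℝ _
  have hGsub : ∀ i, G i ⊆ F i := by
    intro i
    refine convexHull_min ?_ (hFconv i)
    rintro x ⟨S, h, hiS, rfl⟩
    exact Set.mem_iInter₂.1 (hp S h) i hiS
  have hpG : ∀ S (h : S ∈ 𝒮), p S h ∈ ⋂ i ∈ S, G i := by
    intro S h
    rw [Set.mem_iInter₂]
    intro i hiS
    exact subset_convexHull ℝ _ ⟨S, h, hiS, rfl⟩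
  -- minimum points
  have hminex : ∀ S (h : S ∈ 𝒮), ∃ v ∈ ⋂ i ∈ S, G i, ∀ x ∈ ⋂ i ∈ S, G i, Φ v ≤ Φ x := by
    intro S h
    have hSnonempty : S.Nonempty := Finset.card_pos.1 (by rw [hScard S h]; omega)
    obtain ⟨i₀, hi₀⟩ := hSnonempty
    have hKclosed : IsClosed (⋂ i ∈ S, G i) :=
      isClosed_biInter (fun i _ => (hGcomp i).isClosed)
    have hKcomp : IsCompact (⋂ i ∈ S, G i) := by
      refine (hGcomp i₀).of_isClosed_subset hKclosed ?_
      exact Set.biInter_subset_of_mem hi₀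
    obtain ⟨v, hv, hvmin⟩ := hKcomp.exists_isMinOn ⟨p S h, hpG S h⟩
      (Φ_continuous.continuousOn)
    exact ⟨v, hv, fun x hx => hvmin hx⟩
  choose v hv hvmin using hminex
  -- drop one index
  have hdrop : ∀ S (h : S ∈ 𝒮), ∃ i ∈ S,
      ∀ x ∈ ⋂ j ∈ S.erase i, G j, Φ (v S h) ≤ Φ x := by
    intro S h
    exact FracHelly.drop hGconv (hScard S h) (hv S h) (hvmin S h)
  choose ι hιS hιmin using hdrop
  set D : Finset (Fin n) → Finset (Fin n) :=
    (fun S => if h : S ∈ 𝒮 then S.erase (ι S h) else ∅) with hD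
  have hDerase : ∀ S (h : S ∈ 𝒮), D S = S.erase (ι S h) := fun S h => dif_pos h
  have hDcard : ∀ S (h : S ∈ 𝒮), (D S).card = d := by
    intro S h
    rw [hDerase S h, Finset.card_erase_of_mem (hιS S h), hScard S h]
    omega
  -- 𝒮 is nonempty
  have hchoosepos : 0 < (n.choose (d + 1) : ℝ) := by
    exact_mod_cast Nat.cast_pos.2 (Nat.choose_pos hn)
  have h𝒮pos : (0 : ℝ) < (𝒮.card : ℝ) :=
    lt_of_lt_of_le (mul_pos hα0 hchoosepos) hcard
  have h𝒮ne : 𝒮.Nonempty := Finset.card_pos.1 (by exact_mod_cast h𝒮pos)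
  -- pigeonhole
  set 𝒟 := 𝒮.image D with h𝒟
  have h𝒟ne : 𝒟.Nonempty := h𝒮ne.image D
  obtain ⟨D₀, hD₀mem, hD₀max⟩ := Finset.exists_max_image 𝒟
    (fun b => (𝒮.filter (fun S => D S = b)).card) h𝒟ne
  set 𝒞 := 𝒮.filter (fun S => D S = D₀) with h𝒞
  have hsum : 𝒮.card = ∑ b ∈ 𝒟, (𝒮.filter (fun S => D S = b)).card :=
    Finset.card_eq_sum_card_fiberwise (fun S hS => Finset.mem_image_of_mem D hS)
  have hpigeon : 𝒮.card ≤ 𝒟.card * 𝒞.card := by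
    calc 𝒮.card = ∑ b ∈ 𝒟, (𝒮.filter (fun S => D S = b)).card := hsum
      _ ≤ 𝒟.card * 𝒞.card := by
          rw [← smul_eq_mul]
          exact Finset.sum_le_card_nsmul _ _ _ (fun b hb => hD₀max b hb)
  have h𝒟card : 𝒟.card ≤ n.choose d := by
    calc 𝒟.card ≤ (Finset.powersetCard d (Finset.univ : Finset (Fin n))).card := by
          refine Finset.card_le_card ?_
          intro b hb
          obtain ⟨S, hS, rfl⟩ := Finset.mem_image.1 hb
          exact Finset.mem_powersetCard_univ.2 (hDcard S hS)
      _ = n.choose d := by rw [Finset.card_powersetCard, Finset.card_univ, Fintype.card_fin]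
  -- all min points over the common D₀ coincide
  obtain ⟨S₀, hS₀⟩ := Finset.mem_image.1 hD₀mem
  obtain ⟨hS₀𝒮, hS₀D⟩ := hS₀
  have h𝒞mem : ∀ S ∈ 𝒞, S ∈ 𝒮 ∧ D S = D₀ := fun S hS => by
    have := Finset.mem_filter.1 hS; exact ⟨this.1, this.2⟩
  have hconvD₀ : Convex ℝ (⋂ i ∈ D₀, G i) := by
    apply convex_iInter; intro i; apply convex_iInter; intro _; exact hGconv i
  have hminD₀ : ∀ S (h : S ∈ 𝒮), D S = D₀ →
      v S h ∈ (⋂ i ∈ D₀, G i) ∧ ∀ x ∈ ⋂ i ∈ D₀, G i, Φ (v S h) ≤ Φ x := by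
    intro S h hDS
    have hsub : (D₀ : Finset (Fin n)) ⊆ S := by
      rw [← hDS, hDerase S h]; exact Finset.erase_subset _ _
    constructor
    · rw [Set.mem_iInter₂]
      intro i hi
      exact Set.mem_iInter₂.1 (hv S h) i (hsub hi)
    · intro x hx
      refine hιmin S h x ?_
      rw [← hDerase S h, hDS]; exact hx
  set v₀ := v S₀ hS₀𝒮 with hv₀
  have hveq : ∀ S (h : S ∈ 𝒮), D S = D₀ → v S h = v₀ := by
    intro S h hDS
    obtain ⟨hm1, hm2⟩ := hminD₀ S h hDS
    obtain ⟨hm3, hm4⟩ := hminD₀ S₀ hS₀𝒮 hS₀D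
    exact FracHelly.min_unique hconvD₀ hm1 hm3 hm2 hm4
  -- the big intersecting family
  set T := 𝒞.sup id with hT
  have hmemT : ∀ a, a ∈ T ↔ ∃ S ∈ 𝒞, a ∈ S := by
    intro a; rw [hT]; exact Finset.mem_sup
  have hTinter : (⋂ i ∈ T, F i).Nonempty := by
    refine ⟨v₀, ?_⟩
    rw [Set.mem_iInter₂]
    intro i hi
    obtain ⟨S, hS𝒞, hiS⟩ := (hmemT i).1 hi
    obtain ⟨h, hDS⟩ := h𝒞mem S hS𝒞
    have : v S h ∈ G i := Set.mem_iInter₂.1 (hv S h) i hiS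
    rw [hveq S h hDS] at this
    exact hGsub i this
  -- cardinality bound : 𝒞.card ≤ T.card
  have hnpos : 0 < n := by omega
  have hCT : 𝒞.card ≤ T.card := by
    set f : Finset (Fin n) → Fin n := fun S => if h : S ∈ 𝒮 then ι S h else ⟨0, hnpos⟩ with hf
    refine Finset.card_le_card_of_injOn f ?_ ?_
    · intro S hS
      obtain ⟨h, _⟩ := h𝒞mem S hS
      rw [hf]; simp only [dif_pos h]
      exact (hmemT _).2 ⟨S, hS, hιS S h⟩
    · intro S hS S' hS' heq
      obtain ⟨h, hDS⟩ := h𝒞mem S hS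
      obtain ⟨h', hDS'⟩ := h𝒞mem S' hS'
      simp only [hf, dif_pos h, dif_pos h'] at heq
      have e1 : S = insert (ι S h) D₀ := by
        rw [← hDS, hDerase S h, Finset.insert_erase (hιS S h)]
      have e2 : S' = insert (ι S' h') D₀ := by
        rw [← hDS', hDerase S' h', Finset.insert_erase (hιS S' h')]
      rw [e1, e2, heq]
  -- final arithmetic
  refine ⟨T, ?_, hTinter⟩
  have hdn : (d : ℝ) + 1 ≤ (n : ℝ) := by exact_mod_cast hn
  have hid : ((n.choose (d+1) : ℕ) : ℝ) * ((d : ℝ) + 1) = (n.choose d : ℝ) * ((n : ℝ) - d) := by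
    have := Nat.choose_succ_right_eq n d
    have hcast : ((n.choose (d+1) * (d+1) : ℕ) : ℝ) = ((n.choose d * (n - d) : ℕ) : ℝ) := by
      exact_mod_cast congrArg (Nat.cast (R := ℝ)) this
    push_cast [Nat.cast_sub (by omega : d ≤ n)] at hcast
    convert hcast using 2 <;> push_cast <;> ring
  have hcdpos : 0 < (n.choose d : ℝ) := by
    exact_mod_cast Nat.cast_pos.2 (Nat.choose_pos (by omega))
  -- α * C(n,d+1) ≤ 𝒮.card ≤ C(n,d) * 𝒞.card
  have h1 : α * (n.choose (d+1) : ℝ) ≤ (n.choose d : ℝ) * (𝒞.card : ℝ) := by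
    calc α * (n.choose (d+1) : ℝ) ≤ (𝒮.card : ℝ) := hcard
      _ ≤ (𝒟.card : ℝ) * (𝒞.card : ℝ) := by exact_mod_cast hpigeon
      _ ≤ (n.choose d : ℝ) * (𝒞.card : ℝ) := by
          have : (𝒟.card : ℝ) ≤ (n.choose d : ℝ) := by exact_mod_cast h𝒟card
          exact mul_le_mul_of_nonneg_right this (Nat.cast_nonneg _)
  have h6 : (𝒞.card : ℝ) ≤ (T.card : ℝ) := by exact_mod_cast hCT
  exact FracHelly.final_arith hα0 hcdpos (Nat.cast_nonneg d) hdn hid h1 h6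
end
end

section
/- Let A be a real m×n matrix and b a real vector in R^m. Then the system Ax ≤ b has a solution x ≥ 0 if and only if for every row vector y ≥ 0 in R^m with yA ≥ 0 the inequality yb ≥ 0 holds (a variant of Farkas's lemma). -/
open Finset

lemma caratheodory_cone_aux {ι : Type*} [Fintype ι] [DecidableEq ι] {H : Type*}
    [AddCommGroup H] [Module ℝ H] (w : ι → H) :
    ∀ (k : ℕ) (c : ι → ℝ), 0 ≤ c → (univ.filter (fun i => c i ≠ 0)).card ≤ k →
    ∃ c' : ι → ℝ, 0 ≤ c' ∧ (∑ i, c' i • w i) = (∑ i, c i • w i) ∧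
      LinearIndependent ℝ (fun i : {i // c' i ≠ 0} => w (i : ι)) := by
  intro k
  induction k with
  | zero =>
    intro c hc hcard
    refine ⟨c, hc, rfl, ?_⟩
    have h0 : univ.filter (fun i => c i ≠ 0) = ∅ := card_eq_zero.mp (Nat.le_zero.mp hcard)
    haveI : IsEmpty {i // c i ≠ 0} := by
      constructor; rintro ⟨i, hi⟩
      have : i ∈ univ.filter (fun i => c i ≠ 0) := mem_filter.mpr ⟨mem_univ i, hi⟩
      rw [h0] at this; exact absurd this (notMem_empty i)
    exact linearIndependent_empty_type
  | succ k ih =>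
    intro c hc hcard
    by_cases hli : LinearIndependent ℝ (fun i : {i // c i ≠ 0} => w (i : ι))
    · exact ⟨c, hc, rfl, hli⟩
    · rw [Fintype.not_linearIndependent_iff] at hli
      obtain ⟨g, hg0, j, hgj⟩ := hli
      obtain ⟨d, hdsupp, hdsum, i₁, hdi₁⟩ :
          ∃ d : ι → ℝ, (∀ i, c i = 0 → d i = 0) ∧ (∑ i, d i • w i) = 0 ∧ ∃ i, 0 < d i := by
        set d₀ : ι → ℝ := fun i => if h : c i ≠ 0 then g ⟨i, h⟩ else 0 with hd₀
        have hsupp : ∀ i, c i = 0 → d₀ i = 0 := by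
          intro i hi; simp [hd₀, hi]
        have hd₀j : d₀ (j : ι) = g j := by
          simp only [hd₀]; rw [dif_pos j.2]
        have hsum : (∑ i, d₀ i • w i) = 0 := by
          rw [← Finset.sum_filter_add_sum_filter_not univ (fun i => c i ≠ 0)]
          have h1 : ∑ i ∈ univ.filter (fun i => c i ≠ 0), d₀ i • w i
              = ∑ i : {i // c i ≠ 0}, g i • w (i : ι) := by
            rw [Finset.sum_subtype (univ.filter (fun i => c i ≠ 0))
              (p := fun i => c i ≠ 0) (fun i => by simp) (fun i => d₀ i • w i)]
            refine Finset.sum_congr rfl ?_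
            rintro ⟨i, hi⟩ _
            simp [hd₀, hi]
          have h2 : ∑ i ∈ univ.filter (fun i => ¬ c i ≠ 0), d₀ i • w i = 0 := by
            refine Finset.sum_eq_zero ?_
            intro i hi
            simp only [mem_filter, not_not] at hi
            simp [hsupp i hi.2]
          rw [h1, h2, hg0, add_zero]
        by_cases hpos : ∃ i, 0 < d₀ i
        · exact ⟨d₀, hsupp, hsum, hpos⟩
        · push_neg at hpos
          refine ⟨-d₀, fun i hi => by simp [hsupp i hi], by simp [hsum], (j : ι), ?_⟩
          have h1 : d₀ (j : ι) ≠ 0 := by rw [hd₀j]; exact hgj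
          have h2 := hpos (j : ι)
          simp only [Pi.neg_apply]
          exact neg_pos.mpr (lt_of_le_of_ne h2 h1)
      -- now reduce
      classical
      set T : Finset ι := univ.filter (fun i => 0 < d i) with hT
      have hTne : T.Nonempty := ⟨i₁, mem_filter.mpr ⟨mem_univ _, hdi₁⟩⟩
      set t : ℝ := T.inf' hTne (fun i => c i / d i) with ht
      obtain ⟨i₀, hi₀T, hi₀⟩ := Finset.exists_mem_eq_inf' hTne (fun i => c i / d i)
      have hdi₀ : 0 < d i₀ := (mem_filter.mp hi₀T).2
      have ht0 : 0 ≤ t := by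
        rw [ht]
        apply Finset.le_inf'
        intro i hi
        exact div_nonneg (hc i) (le_of_lt (mem_filter.mp hi).2)
      set c' : ι → ℝ := fun i => c i - t * d i with hc'
      have hc'0 : 0 ≤ c' := by
        intro i
        by_cases hdi : 0 < d i
        · have : t ≤ c i / d i :=
            Finset.inf'_le (f := fun i => c i / d i) (mem_filter.mpr ⟨mem_univ _, hdi⟩)
          have := (le_div_iff₀ hdi).mp this
          simpa [hc'] using this
        · push_neg at hdi
          have : t * d i ≤ 0 := mul_nonpos_of_nonneg_of_nonpos ht0 hdi
          have := sub_nonneg.mpr (this.trans (hc i))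
          simpa [hc'] using sub_nonneg.mpr (le_trans this (le_refl _))
      have hsum' : (∑ i, c' i • w i) = ∑ i, c i • w i := by
        simp only [hc', sub_smul, mul_smul, Finset.sum_sub_distrib]
        rw [← Finset.smul_sum, hdsum, smul_zero, sub_zero]
      have hci₀ : c i₀ ≠ 0 := by
        intro h
        exact absurd (hdsupp i₀ h) (ne_of_gt hdi₀)
      have hc'i₀ : c' i₀ = 0 := by
        simp only [hc']
        rw [ht, hi₀]
        field_simp
        ring
      have hss : univ.filter (fun i => c' i ≠ 0) ⊂ univ.filter (fun i => c i ≠ 0) := by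
        constructor
        · intro i hi
          simp only [mem_filter, mem_univ, true_and] at hi ⊢
          intro h
          exact hi (by simp [hc', h, hdsupp i h])
        · intro hsub
          have : i₀ ∈ univ.filter (fun i => c' i ≠ 0) :=
            hsub (mem_filter.mpr ⟨mem_univ _, hci₀⟩)
          exact (mem_filter.mp this).2 hc'i₀
      have hcard' : (univ.filter (fun i => c' i ≠ 0)).card ≤ k := by
        have := Finset.card_lt_card hss
        omega
      obtain ⟨c'', h1, h2, h3⟩ := ih c' hc'0 hcard'
      exact ⟨c'', h1, h2.trans hsum', h3⟩

lemma isClosed_fg_cone {ι : Type*} [Fintype ι] [DecidableEq ι] {H : Type*}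
    [NormedAddCommGroup H] [NormedSpace ℝ H] [FiniteDimensional ℝ H] (w : ι → H) :
    IsClosed {z : H | ∃ c : ι → ℝ, 0 ≤ c ∧ z = ∑ i, c i • w i} := by
  classical
  have key : {z : H | ∃ c : ι → ℝ, 0 ≤ c ∧ z = ∑ i, c i • w i}
      = ⋃ s : Finset ι, {z : H | LinearIndependent ℝ (fun i : s => w (i : ι)) ∧
          ∃ c : ι → ℝ, 0 ≤ c ∧ (∀ i ∉ s, c i = 0) ∧ z = ∑ i, c i • w i} := by
    ext z
    simp only [Set.mem_setOf_eq, Set.mem_iUnion]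
    constructor
    · rintro ⟨c, hc, rfl⟩
      obtain ⟨c', hc'0, hc'sum, hc'li⟩ := caratheodory_cone_aux w
        ((univ.filter (fun i => c i ≠ 0)).card) c hc le_rfl
      refine ⟨univ.filter (fun i => c' i ≠ 0), ?_, c', hc'0, ?_, hc'sum.symm⟩
      · set e : {i // c' i ≠ 0} ≃ {i // i ∈ univ.filter (fun i => c' i ≠ 0)} :=
          Equiv.subtypeEquivRight (fun i => by simp) with he
        have := hc'li.comp e.symm e.symm.injective
        convert this using 2 with i
        rfl
      · intro i hi
        simp only [mem_filter, mem_univ, true_and, not_not] at hi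
        exact hi
    · rintro ⟨s, _, c, hc, _, rfl⟩
      exact ⟨c, hc, rfl⟩
  rw [key]
  apply isClosed_iUnion_of_finite
  intro s
  by_cases hli : LinearIndependent ℝ (fun i : s => w (i : ι))
  · -- image of the nonnegative orthant under an injective linear map
    set L : ({i // i ∈ s} → ℝ) →ₗ[ℝ] H :=
      { toFun := fun c => ∑ j, c j • w (j : ι)
        map_add' := by intro a b; simp [add_smul, Finset.sum_add_distrib]
        map_smul' := by intro r a; simp [mul_smul, Finset.smul_sum] } with hL
    have hinj : Function.Injective L := by
      intro a b hab
      have h0 : L (a - b) = 0 := by rw [map_sub, hab, sub_self]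
      have := Fintype.linearIndependent_iff.mp hli (a - b) (by
        simpa [hL] using h0)
      funext j
      have := this j
      simpa [sub_eq_zero] using this
    have heq : {z : H | LinearIndependent ℝ (fun i : s => w (i : ι)) ∧
        ∃ c : ι → ℝ, 0 ≤ c ∧ (∀ i ∉ s, c i = 0) ∧ z = ∑ i, c i • w i}
        = L '' {c : {i // i ∈ s} → ℝ | 0 ≤ c} := by
      ext z
      simp only [Set.mem_setOf_eq, Set.mem_image]
      constructor
      · rintro ⟨-, c, hc, hcs, rfl⟩
        refine ⟨fun j => c (j : ι), fun j => hc _, ?_⟩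
        simp only [hL, LinearMap.coe_mk, AddHom.coe_mk]
        show (∑ j : {i // i ∈ s}, c (j : ι) • w (j : ι)) = ∑ i, c i • w i
        rw [Finset.sum_coe_sort s (fun i => c i • w i)]
        exact Finset.sum_subset (Finset.subset_univ s)
          (fun i _ hi => by rw [hcs i hi, zero_smul])
      · rintro ⟨c, hc, rfl⟩
        refine ⟨hli, fun i => if h : i ∈ s then c ⟨i, h⟩ else 0, ?_, ?_, ?_⟩
        · intro i
          by_cases h : i ∈ s
          · simp only [dif_pos h]; exact hc _
          · simp [h]
        · intro i hi; simp [hi]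
        · simp only [hL, LinearMap.coe_mk, AddHom.coe_mk]
          show (∑ j : {i // i ∈ s}, c j • w (j : ι)) = _
          rw [← Finset.sum_subset (Finset.subset_univ s)
            (fun i _ hi => by simp [hi]),
            ← Finset.sum_coe_sort s (fun i => (if h : i ∈ s then c ⟨i, h⟩ else 0) • w i)]
          exact Finset.sum_congr rfl (fun j _ => by simp [j.2])
    rw [heq]
    have hclosed : IsClosed {c : {i // i ∈ s} → ℝ | 0 ≤ c} := by
      have : {c : {i // i ∈ s} → ℝ | 0 ≤ c} = ⋂ j, {c | 0 ≤ c j} := by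
        ext c; simp [Pi.le_def, Set.mem_iInter]
      rw [this]
      exact isClosed_iInter (fun j => isClosed_le continuous_const (continuous_apply j))
    exact (L.isClosedEmbedding_of_injective (LinearMap.ker_eq_bot.mpr hinj)).isClosedMap
      _ hclosed
  · convert isClosed_empty
    ext z
    simp only [Set.mem_setOf_eq, Set.mem_empty_iff_false, iff_false]
    rintro ⟨h, -⟩
    exact hli h

/-- Farkas's lemma variant: Ax ≤ b has a solution x ≥ 0 iff every y ≥ 0 with yA ≥ 0
satisfies yb ≥ 0. -/
theorem farkas_variant (m n : ℕ) (A : Matrix (Fin m) (Fin n) ℝ) (b : Fin m → ℝ) :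
    (∃ x : Fin n → ℝ, 0 ≤ x ∧ A.mulVec x ≤ b) ↔
      (∀ y : Fin m → ℝ, 0 ≤ y → 0 ≤ Matrix.vecMul y A → 0 ≤ dotProduct y b) := by
  classical
  constructor
  · rintro ⟨x, hx, hAx⟩ y hy hyA
    have h1 : 0 ≤ dotProduct y (b - A.mulVec x) :=
      Finset.sum_nonneg fun i _ => mul_nonneg (hy i) (sub_nonneg.mpr (hAx i))
    have h2 : 0 ≤ dotProduct y (A.mulVec x) := by
      rw [Matrix.dotProduct_mulVec]
      exact Finset.sum_nonneg fun j _ => mul_nonneg (hyA j) (hx j)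
    have h3 := add_nonneg h1 h2
    rw [dotProduct_sub] at h3
    linarith
  · intro h
    by_contra hno
    set E := EuclideanSpace ℝ (Fin m) with hE
    set w : (Fin n ⊕ Fin m) → E :=
      Sum.elim (fun j => WithLp.toLp 2 (fun i => A i j : Fin m → ℝ)) (fun i => WithLp.toLp 2 (Pi.single i 1)) with hw
    -- key sum identity
    have hsum : ∀ c : (Fin n ⊕ Fin m) → ℝ,
        (∑ i, c i • w i) = WithLp.toLp 2 (fun i => A.mulVec (c ∘ Sum.inl) i + c (Sum.inr i) : Fin m → ℝ) := by
      intro c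
      ext i
      have : (∑ k, c k • w k) i = ∑ k, c k * w k i := by
        rw [WithLp.ofLp_sum, Finset.sum_apply]
        rfl
      rw [this, Fintype.sum_sum_type]
      congr 1
      · simp [hw, Matrix.mulVec, dotProduct, mul_comm]
      · simp [hw, Pi.single_apply]
    set S : Set E := {z : E | ∃ c : (Fin n ⊕ Fin m) → ℝ, 0 ≤ c ∧ z = ∑ i, c i • w i}
      with hS
    set K : ConvexCone ℝ E :=
      { carrier := S
        smul_mem' := by
          rintro r hr z ⟨c, hc, rfl⟩
          refine ⟨fun i => r * c i, fun i => mul_nonneg hr.le (hc i), ?_⟩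
          simp [mul_smul, Finset.smul_sum]
        add_mem' := by
          rintro z ⟨c, hc, rfl⟩ z' ⟨c', hc', rfl⟩
          refine ⟨c + c', fun i => add_nonneg (hc i) (hc' i), ?_⟩
          simp [add_smul, Finset.sum_add_distrib] } with hK
    have hKS : (K : Set E) = S := rfl
    have hne : (K : Set E).Nonempty := ⟨0, ⟨0, le_refl _, by simp⟩⟩
    have hcl : IsClosed (K : Set E) := isClosed_fg_cone w
    set b' : E := WithLp.toLp 2 b with hb'
    have hdisj : b' ∉ K := by
      rintro ⟨c, hc, hbc⟩
      refine hno ⟨c ∘ Sum.inl, fun j => hc _, ?_⟩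
      intro i
      have := congrFun (congrArg WithLp.ofLp (hbc.trans (hsum c))) i
      have h2 : 0 ≤ c (Sum.inr i) := hc _
      have hbi : b' i = b i := rfl
      simp only [hbi, WithLp.ofLp_toLp] at this
      linarith
    obtain ⟨y, hy1, hy2⟩ :=
      ProperCone.hyperplane_separation' (⟨K.toPointedCone (ConvexCone.Pointed.of_nonempty_of_isClosed hne hcl), hcl⟩ : ProperCone ℝ E) hdisj
    have hinner : ∀ z : E, (inner ℝ z y : ℝ) = ∑ i, z i * y i := by
      intro z
      rw [PiLp.inner_apply]
      simp [RCLike.inner_apply, mul_comm]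
    have hwmem : ∀ k, w k ∈ K := by
      intro k
      refine ⟨fun k' => if k' = k then 1 else 0, fun k' => by positivity, ?_⟩
      have hterm : ∀ i, ((if i = k then (1:ℝ) else 0)) • w i
          = if i = k then w k else 0 := by
        intro i; split
        · simp_all
        · simp
      rw [Finset.sum_congr rfl fun i _ => hterm i, Finset.sum_ite_eq' Finset.univ k]
      simp
    have hy0 : (0 : Fin m → ℝ) ≤ y := by
      intro i
      have := hy1 _ (hwmem (Sum.inr i))
      rw [hinner] at this
      simpa [hw, Pi.single_apply] using this
    have hyA : 0 ≤ Matrix.vecMul y A := by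
      intro j
      have := hy1 _ (hwmem (Sum.inl j))
      rw [hinner] at this
      simpa [hw, Matrix.vecMul, dotProduct, mul_comm] using this
    have hfin := h y hy0 hyA
    rw [PiLp.inner_apply] at hy2
    simp only [RCLike.inner_apply, conj_trivial] at hy2
    have hdp : dotProduct y b' = ∑ i, y i * b' i := rfl
    rw [hdp] at hfin
    linarith
end
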